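/- arXiv:2408.06917 — 2 statements merged into one kernel-verified Lean document; each statement's English description precedes it below -/
import Mathlib

section
/- Milnor–Moore theorem, essential image (Theorem "Mil"): Let K be a field of characteristic zero, H a Hopf algebra over K, and P a Lie subalgebra of H (for the commutator bracket) whose carrier is exactly the set of primitive elements of H. If H is generated as a K-algebra by its primitive elements (Algebra.adjoin K {a : H | a is primitive} = ⊤), then the K-algebra homomorphism U(P) → H obtained by applying the universal property of the universal enveloping algebra to the inclusion Lie algebra homomorphism P → H is bijective. -/
open TensorProduct
attribute [local instance 100] LieRing.ofAssociativeRing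
set_option linter.unusedSectionVars false
set_option maxHeartbeats 1000000
set_option synthInstance.maxHeartbeats 400000

namespace MilnorMooreAux

variable (K : Type*) [Field K] [CharZero K]
variable (L : Type*) [LieRing L] [LieAlgebra K L]

local notation "𝒰" => UniversalEnvelopingAlgebra

/-- linear inclusion -/
noncomputable def ιL : L →ₗ[K] 𝒰 K L := (UniversalEnvelopingAlgebra.ι K : L →ₗ⁅K⁆ 𝒰 K L)

noncomputable def W : Submodule K (𝒰 K L) := LinearMap.range (ιL K L)

noncomputable def F : ℕ → Submodule K (𝒰 K L)
  | 0 => 1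
  | n+1 => F n ⊔ F n * W K L

noncomputable def εU : 𝒰 K L →ₐ[K] K := UniversalEnvelopingAlgebra.lift K (0 : L →ₗ⁅K⁆ K)

noncomputable def dLin : L →ₗ[K] (𝒰 K L ⊗[K] 𝒰 K L) :=
  (((TensorProduct.mk K (𝒰 K L) (𝒰 K L)).flip 1).comp (ιL K L)) +
    ((TensorProduct.mk K (𝒰 K L) (𝒰 K L) 1).comp (ιL K L))

lemma dLin_apply (x : L) : dLin K L x = ιL K L x ⊗ₜ[K] 1 + 1 ⊗ₜ[K] ιL K L x := rfl

noncomputable def dHom : L →ₗ⁅K⁆ (𝒰 K L ⊗[K] 𝒰 K L) :=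
  { dLin K L with
    map_lie' := by
      intro x y
      show dLin K L ⁅x, y⁆ = ⁅dLin K L x, dLin K L y⁆
      have hb := LieRing.of_associative_ring_bracket (dLin K L x) (dLin K L y)
      rw [hb, dLin_apply, dLin_apply, dLin_apply]
      have h : ιL K L ⁅x, y⁆ = ιL K L x * ιL K L y - ιL K L y * ιL K L x := by
        have h0 := (UniversalEnvelopingAlgebra.ι K (L := L)).map_lie x y
        rw [LieRing.of_associative_ring_bracket] at h0
        exact h0
      rw [h]
      simp only [add_mul, mul_add, sub_mul, mul_sub, Algebra.TensorProduct.tmul_mul_tmul,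
        one_mul, mul_one, sub_tmul, tmul_sub, add_tmul, tmul_add]
      abel }

noncomputable def Δ : 𝒰 K L →ₐ[K] (𝒰 K L ⊗[K] 𝒰 K L) :=
  UniversalEnvelopingAlgebra.lift K (dHom K L)

@[simp] lemma Δ_ι (x : L) : Δ K L (ιL K L x) = ιL K L x ⊗ₜ[K] 1 + 1 ⊗ₜ[K] ιL K L x :=
  UniversalEnvelopingAlgebra.lift_ι_apply K (dHom K L) x

@[simp] lemma εU_ι (x : L) : εU K L (ιL K L x) = 0 :=
  UniversalEnvelopingAlgebra.lift_ι_apply K (0 : L →ₗ⁅K⁆ K) x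


local notation "𝒰KL" => UniversalEnvelopingAlgebra K L

lemma F_zero : F K L 0 = 1 := rfl

lemma F_succ (n : ℕ) : F K L (n+1) = F K L n ⊔ F K L n * W K L := rfl

lemma F_le_succ (n : ℕ) : F K L n ≤ F K L (n+1) := le_sup_left

lemma F_mono : Monotone (F K L) := monotone_nat_of_le_succ (F_le_succ K L)

lemma one_mem_F (n : ℕ) : (1 : 𝒰KL) ∈ F K L n := by
  induction n with
  | zero =>
    rw [F_zero, Submodule.one_eq_range]
    exact ⟨1, by simp⟩
  | succ n ih => exact F_le_succ K L n ih

lemma algebraMap_mem_F (c : K) (n : ℕ) : algebraMap K 𝒰KL c ∈ F K L n := by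
  rw [Algebra.algebraMap_eq_smul_one]
  exact Submodule.smul_mem _ _ (one_mem_F K L n)

lemma ι_mem_W (x : L) : ιL K L x ∈ W K L := LinearMap.mem_range_self _ x

lemma F_mul_W (n : ℕ) : F K L n * W K L ≤ F K L (n+1) := le_sup_right

lemma W_le_F_one : W K L ≤ F K L 1 := by
  have h : F K L 0 * W K L = W K L := by rw [F_zero, Submodule.one_mul]
  rw [F_succ, h]
  exact le_sup_right

lemma F_mul (m n : ℕ) : F K L m * F K L n ≤ F K L (m + n) := by
  induction n with
  | zero =>
    rw [F_zero, Submodule.mul_one]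
    exact le_rfl
  | succ n ih =>
    rw [F_succ, Submodule.mul_sup, ← mul_assoc]
    refine sup_le (ih.trans (F_mono K L (by omega))) ?_
    calc F K L m * F K L n * W K L ≤ F K L (m + n) * W K L :=
          mul_le_mul' ih le_rfl
      _ ≤ F K L (m + n + 1) := F_mul_W K L _
    
/-- commutator with a fixed element, as a linear map -/
noncomputable def adU (u : 𝒰KL) : 𝒰KL →ₗ[K] 𝒰KL :=
  LinearMap.mulLeft K u - LinearMap.mulRight K u

lemma adU_apply (u y : 𝒰KL) : adU K L u y = u * y - y * u := rfl

lemma adU_ι (x q : L) : adU K L (ιL K L x) (ιL K L q) = ιL K L ⁅x, q⁆ := by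
  have h := (UniversalEnvelopingAlgebra.ι K (L := L)).map_lie x q
  rw [adU_apply]
  rw [show ιL K L ⁅x, q⁆ = (UniversalEnvelopingAlgebra.ι K (L := L)) ⁅x, q⁆ from rfl, h]
  rfl

lemma ad_F (x : L) (n : ℕ) : F K L n ≤ (F K L n).comap (adU K L (ιL K L x)) := by
  induction n with
  | zero =>
    intro y hy
    rw [F_zero, Submodule.one_eq_range] at hy
    obtain ⟨c, rfl⟩ := hy
    simp only [Submodule.mem_comap, adU_apply, Algebra.linearMap_apply]
    rw [Algebra.commutes, sub_self]
    exact Submodule.zero_mem _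
  | succ n ih =>
    rw [F_succ]
    refine sup_le (ih.trans (Submodule.comap_mono (F_le_succ K L n))) ?_
    refine Submodule.mul_le.mpr ?_
    intro y hy w hw
    obtain ⟨q, rfl⟩ := hw
    simp only [Submodule.mem_comap]
    have key : adU K L (ιL K L x) (y * ιL K L q)
        = adU K L (ιL K L x) y * ιL K L q + y * ιL K L ⁅x, q⁆ := by
      rw [← adU_ι K L x q]
      simp only [adU_apply]
      noncomm_ring
    rw [key]
    refine Submodule.add_mem _ ?_ ?_
    · exact F_mul_W K L n (Submodule.mul_mem_mul (ih hy) (ι_mem_W K L q))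
    · exact F_mul_W K L n (Submodule.mul_mem_mul hy (ι_mem_W K L ⁅x, q⁆))


/-- tensor product of submodules, as a submodule of the tensor product -/
noncomputable def TP (M N : Submodule K 𝒰KL) : Submodule K (𝒰KL ⊗[K] 𝒰KL) :=
  LinearMap.range (TensorProduct.map M.subtype N.subtype)

lemma tmul_mem_TP {M N : Submodule K 𝒰KL} {a b : 𝒰KL} (ha : a ∈ M) (hb : b ∈ N) :
    a ⊗ₜ[K] b ∈ TP K L M N :=
  ⟨(⟨a, ha⟩ : M) ⊗ₜ[K] (⟨b, hb⟩ : N), by simp⟩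

lemma TP_le {M N : Submodule K 𝒰KL} {Q : Submodule K (𝒰KL ⊗[K] 𝒰KL)}
    (h : ∀ a ∈ M, ∀ b ∈ N, a ⊗ₜ[K] b ∈ Q) : TP K L M N ≤ Q := by
  rintro z ⟨y, rfl⟩
  induction y with
  | zero => simpa using Submodule.zero_mem Q
  | tmul m n => simpa using h m m.2 n n.2
  | add y₁ y₂ h₁ h₂ =>
    rw [map_add]
    exact Submodule.add_mem _ h₁ h₂

lemma TP_mono {M N M' N' : Submodule K 𝒰KL} (hM : M ≤ M') (hN : N ≤ N') :
    TP K L M N ≤ TP K L M' N' :=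
  TP_le K L fun a ha b hb => tmul_mem_TP K L (hM ha) (hN hb)

/-- the filtration on the tensor square induced by `F` -/
noncomputable def DD (n : ℕ) : Submodule K (𝒰KL ⊗[K] 𝒰KL) :=
  ⨆ (i : ℕ) (_ : i ≤ n), TP K L (F K L i) (F K L (n - i))

lemma TP_le_DD {i n : ℕ} (h : i ≤ n) : TP K L (F K L i) (F K L (n - i)) ≤ DD K L n :=
  le_iSup_of_le i (le_iSup_of_le h le_rfl)

lemma DD_le {n : ℕ} {Q : Submodule K (𝒰KL ⊗[K] 𝒰KL)}
    (h : ∀ i ≤ n, TP K L (F K L i) (F K L (n - i)) ≤ Q) : DD K L n ≤ Q :=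
  iSup_le fun i => iSup_le fun hi => h i hi

lemma DD_le_succ (n : ℕ) : DD K L n ≤ DD K L (n+1) :=
  DD_le K L fun i hi =>
    (TP_mono K L le_rfl (F_mono K L (by omega))).trans (TP_le_DD K L (by omega))

lemma Δ_F (n : ℕ) : F K L n ≤ (DD K L n).comap (Δ K L).toLinearMap := by
  induction n with
  | zero =>
    intro y hy
    rw [F_zero, Submodule.one_eq_range] at hy
    obtain ⟨c, rfl⟩ := hy
    simp only [Submodule.mem_comap, AlgHom.toLinearMap_apply, Algebra.linearMap_apply,
      AlgHom.commutes]
    rw [Algebra.TensorProduct.algebraMap_apply]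
    exact TP_le_DD K L (le_refl 0) (tmul_mem_TP K L (algebraMap_mem_F K L c 0) (one_mem_F K L 0))
  | succ n ih =>
    rw [F_succ]
    refine sup_le (ih.trans (Submodule.comap_mono (DD_le_succ K L n))) ?_
    refine Submodule.mul_le.mpr ?_
    intro y hy w hw
    obtain ⟨q, rfl⟩ := hw
    simp only [Submodule.mem_comap, AlgHom.toLinearMap_apply, map_mul, Δ_ι]
    rw [mul_add]
    refine Submodule.add_mem _ ?_ ?_
    · -- Δ y * (ι q ⊗ₜ 1) ∈ DD (n+1)
      have h1 : DD K L n ≤ (DD K L (n+1)).comap (LinearMap.mulRight K (ιL K L q ⊗ₜ[K] 1)) := by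
        refine DD_le K L fun i hi => TP_le K L fun a ha b hb => ?_
        simp only [Submodule.mem_comap, LinearMap.mulRight_apply,
          Algebra.TensorProduct.tmul_mul_tmul, mul_one]
        refine TP_le_DD K L (show i+1 ≤ n+1 by omega) (tmul_mem_TP K L ?_ ?_)
        · exact F_mul_W K L i (Submodule.mul_mem_mul ha (ι_mem_W K L q))
        · exact F_mono K L (by omega) hb
      exact h1 (ih hy)
    · have h1 : DD K L n ≤ (DD K L (n+1)).comap (LinearMap.mulRight K ((1 : 𝒰KL) ⊗ₜ[K] ιL K L q)) := by
        refine DD_le K L fun i hi => TP_le K L fun a ha b hb => ?_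
        simp only [Submodule.mem_comap, LinearMap.mulRight_apply,
          Algebra.TensorProduct.tmul_mul_tmul, mul_one]
        refine TP_le_DD K L (show i ≤ n+1 by omega) ?_
        have : n + 1 - i = (n - i) + 1 := by omega
        rw [this]
        exact tmul_mem_TP K L ha (F_mul_W K L _ (Submodule.mul_mem_mul hb (ι_mem_W K L q)))
      exact h1 (ih hy)

/-- `a ⊗ b ↦ a * [u, b]`, as a linear map -/
noncomputable def Gmap (u : 𝒰KL) : (𝒰KL ⊗[K] 𝒰KL) →ₗ[K] 𝒰KL :=
  (LinearMap.mul' K 𝒰KL) ∘ₗ (LinearMap.lTensor 𝒰KL (adU K L u))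

lemma Gmap_tmul (u a b : 𝒰KL) : Gmap K L u (a ⊗ₜ[K] b) = a * (u * b - b * u) := by
  simp [Gmap, adU_apply]

lemma G_DD (x : L) (n : ℕ) : DD K L n ≤ (F K L n).comap (Gmap K L (ιL K L x)) := by
  refine DD_le K L fun i hi => TP_le K L fun a ha b hb => ?_
  simp only [Submodule.mem_comap, Gmap_tmul]
  have hb' : ιL K L x * b - b * ιL K L x ∈ F K L (n - i) := ad_F K L x (n-i) hb
  have := F_mul K L i (n-i) (Submodule.mul_mem_mul ha hb')
  rwa [show i + (n - i) = n by omega] at this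


/-- the operator `x ↦ mul (Δ x)` -/
noncomputable def Tl : 𝒰KL →ₗ[K] 𝒰KL :=
  (LinearMap.mul' K 𝒰KL) ∘ₗ (Δ K L).toLinearMap

lemma Tl_apply (x : 𝒰KL) : Tl K L x = LinearMap.mul' K 𝒰KL (Δ K L x) := rfl

lemma mul'_mul_right_one (u : 𝒰KL) (z : 𝒰KL ⊗[K] 𝒰KL) :
    LinearMap.mul' K 𝒰KL (z * ((1 : 𝒰KL) ⊗ₜ[K] u)) = LinearMap.mul' K 𝒰KL z * u := by
  induction z with
  | zero => simp
  | tmul a b => simp [Algebra.TensorProduct.tmul_mul_tmul, mul_assoc]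
  | add z₁ z₂ h₁ h₂ => rw [add_mul, map_add, h₁, h₂, map_add, add_mul]

lemma mul'_mul_left_one (u : 𝒰KL) (z : 𝒰KL ⊗[K] 𝒰KL) :
    LinearMap.mul' K 𝒰KL (z * (u ⊗ₜ[K] (1 : 𝒰KL))) =
      LinearMap.mul' K 𝒰KL z * u + Gmap K L u z := by
  induction z with
  | zero => simp
  | tmul a b =>
    simp only [Algebra.TensorProduct.tmul_mul_tmul, mul_one, LinearMap.mul'_apply, Gmap_tmul]
    noncomm_ring
  | add z₁ z₂ h₁ h₂ =>
    rw [add_mul, map_add, h₁, h₂, map_add, map_add, add_mul]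
    abel

lemma euler (n : ℕ) :
    F K L (n+1) ≤ (F K L n).comap (Tl K L - ((2:K)^(n+1)) • LinearMap.id) := by
  induction n with
  | zero =>
    rw [F_succ]
    have hW : F K L 0 * W K L = W K L := by rw [F_zero, Submodule.one_mul]
    rw [hW]
    refine sup_le ?_ ?_
    · intro y hy
      rw [F_zero, Submodule.one_eq_range] at hy
      obtain ⟨c, rfl⟩ := hy
      simp only [Submodule.mem_comap, LinearMap.sub_apply, LinearMap.smul_apply,
        LinearMap.id_coe, id_eq, Tl_apply, Algebra.linearMap_apply, AlgHom.commutes]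
      rw [Algebra.TensorProduct.algebraMap_apply]
      simp only [LinearMap.mul'_apply, mul_one]
      have : algebraMap K 𝒰KL c - (2:K)^1 • algebraMap K 𝒰KL c
          = -(algebraMap K 𝒰KL c) := by
        rw [pow_one, two_smul]
        abel
      rw [this]
      exact Submodule.neg_mem _ (algebraMap_mem_F K L c 0)
    · intro w hw
      obtain ⟨q, rfl⟩ := hw
      simp only [Submodule.mem_comap, LinearMap.sub_apply, LinearMap.smul_apply,
        LinearMap.id_coe, id_eq, Tl_apply, Δ_ι]
      rw [map_add]
      simp only [LinearMap.mul'_apply, mul_one, one_mul]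
      rw [pow_one, two_smul, sub_self]
      exact Submodule.zero_mem _
  | succ n ih =>
    rw [F_succ]
    refine sup_le ?_ (Submodule.mul_le.mpr ?_)
    · intro y hy
      simp only [Submodule.mem_comap, LinearMap.sub_apply, LinearMap.smul_apply,
        LinearMap.id_coe, id_eq]
      have h1 : Tl K L y - (2:K)^(n+1) • y ∈ F K L n := ih hy
      have : Tl K L y - (2:K)^(n+2) • y
          = (Tl K L y - (2:K)^(n+1) • y) - ((2:K)^(n+2) - (2:K)^(n+1)) • y := by
        rw [sub_smul]; abel
      rw [this]
      exact Submodule.sub_mem _ (F_le_succ K L n h1) (Submodule.smul_mem _ _ hy)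
    · intro y hy w hw
      obtain ⟨q, rfl⟩ := hw
      simp only [Submodule.mem_comap, LinearMap.sub_apply, LinearMap.smul_apply,
        LinearMap.id_coe, id_eq, Tl_apply, map_mul, Δ_ι]
      rw [mul_add, map_add, mul'_mul_left_one, mul'_mul_right_one]
      have h1 : Tl K L y - (2:K)^(n+1) • y ∈ F K L n := ih hy
      have key : LinearMap.mul' K 𝒰KL (Δ K L y) * ιL K L q + Gmap K L (ιL K L q) (Δ K L y)
            + LinearMap.mul' K 𝒰KL (Δ K L y) * ιL K L q - (2:K)^(n+2) • (y * ιL K L q)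
          = (2:K) • ((Tl K L y - (2:K)^(n+1) • y) * ιL K L q)
            + Gmap K L (ιL K L q) (Δ K L y) := by
        rw [← Tl_apply]
        rw [sub_mul, smul_mul_assoc ((2:K)^(n+1)) y (ιL K L q), smul_sub, smul_smul]
        rw [show (2:K) * (2:K)^(n+1) = (2:K)^(n+2) by ring]
        rw [two_smul]
        abel
      rw [key]
      refine Submodule.add_mem _ ?_ ?_
      · refine Submodule.smul_mem _ _ ?_
        exact F_mul_W K L n (Submodule.mul_mem_mul h1 (ι_mem_W K L q))
      · exact G_DD K L q (n+1) (Δ_F K L (n+1) hy)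


/-- the "reduced comultiplication" `x ↦ Δ x − x⊗1 − 1⊗x + ε x • (1⊗1)` -/
noncomputable def Dt : 𝒰KL →ₗ[K] (𝒰KL ⊗[K] 𝒰KL) :=
  (Δ K L).toLinearMap - (TensorProduct.mk K 𝒰KL 𝒰KL).flip 1 - TensorProduct.mk K 𝒰KL 𝒰KL 1
    + (εU K L).toLinearMap.smulRight ((1 : 𝒰KL) ⊗ₜ[K] (1 : 𝒰KL))

lemma Dt_apply (x : 𝒰KL) :
    Dt K L x = Δ K L x - x ⊗ₜ[K] 1 - 1 ⊗ₜ[K] x + εU K L x • ((1:𝒰KL) ⊗ₜ[K] (1:𝒰KL)) := rfl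

lemma Dt_F (n : ℕ) : F K L (n+1) ≤ (TP K L (F K L n) (F K L n)).comap (Dt K L) := by
  induction n with
  | zero =>
    rw [F_succ]
    have hW : F K L 0 * W K L = W K L := by rw [F_zero, Submodule.one_mul]
    rw [hW]
    refine sup_le ?_ ?_
    · intro y hy
      rw [F_zero, Submodule.one_eq_range] at hy
      obtain ⟨c, rfl⟩ := hy
      simp only [Submodule.mem_comap, Dt_apply, Algebra.linearMap_apply, AlgHom.commutes]
      rw [Algebra.TensorProduct.algebraMap_apply, Algebra.algebraMap_eq_smul_one (A := 𝒰KL),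
        Algebra.algebraMap_eq_smul_one (A := K)]
      rw [smul_tmul', smul_eq_mul, mul_one]
      have hA : (c • (1:𝒰KL)) ⊗ₜ[K] (1:𝒰KL) ∈ TP K L (F K L 0) (F K L 0) :=
        tmul_mem_TP K L (Submodule.smul_mem _ _ (one_mem_F K L 0)) (one_mem_F K L 0)
      have hB : (1:𝒰KL) ⊗ₜ[K] (c • (1:𝒰KL)) ∈ TP K L (F K L 0) (F K L 0) :=
        tmul_mem_TP K L (one_mem_F K L 0) (Submodule.smul_mem _ _ (one_mem_F K L 0))
      exact Submodule.add_mem _ (Submodule.sub_mem _ (Submodule.sub_mem _ hA hA) hB) hA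
    · intro w hw
      obtain ⟨q, rfl⟩ := hw
      simp only [Submodule.mem_comap, Dt_apply, Δ_ι, εU_ι, zero_smul, add_zero]
      have : ιL K L q ⊗ₜ[K] (1:𝒰KL) + (1:𝒰KL) ⊗ₜ[K] ιL K L q - ιL K L q ⊗ₜ[K] 1
          - (1:𝒰KL) ⊗ₜ[K] ιL K L q = 0 := by abel
      rw [this]
      exact Submodule.zero_mem _
  | succ n ih =>
    rw [F_succ]
    refine sup_le (ih.trans (Submodule.comap_mono (TP_mono K L (F_le_succ K L n) (F_le_succ K L n))))
      (Submodule.mul_le.mpr ?_)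
    intro y hy w hw
    obtain ⟨q, rfl⟩ := hw
    simp only [Submodule.mem_comap]
    set u := ιL K L q with hu
    have hεy : εU K L (y * u) = 0 := by rw [map_mul, hu, εU_ι, mul_zero]
    have hΔ : Δ K L (y * u) = Δ K L y * (u ⊗ₜ[K] 1 + 1 ⊗ₜ[K] u) := by rw [map_mul, hu, Δ_ι]
    have hΔy : Δ K L y = Dt K L y + (y ⊗ₜ[K] 1 + 1 ⊗ₜ[K] y - εU K L y • ((1:𝒰KL) ⊗ₜ[K] 1)) := by
      rw [Dt_apply]; abel
    have key : Dt K L (y * u) = Dt K L y * (u ⊗ₜ[K] 1 + 1 ⊗ₜ[K] u)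
        + u ⊗ₜ[K] y + y ⊗ₜ[K] u - εU K L y • (u ⊗ₜ[K] 1 + 1 ⊗ₜ[K] u) := by
      rw [Dt_apply, hεy, zero_smul, add_zero, hΔ, hΔy]
      simp only [add_mul, sub_mul, mul_add, smul_mul_assoc,
        Algebra.TensorProduct.tmul_mul_tmul, one_mul, mul_one, smul_add]
      abel
    rw [key]
    have h1 : Dt K L y * (u ⊗ₜ[K] 1 + 1 ⊗ₜ[K] u) ∈ TP K L (F K L (n+1)) (F K L (n+1)) := by
      rw [mul_add]
      have hle : TP K L (F K L n) (F K L n)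
          ≤ (TP K L (F K L (n+1)) (F K L (n+1))).comap
            (LinearMap.mulRight K (u ⊗ₜ[K] (1:𝒰KL)) + LinearMap.mulRight K ((1:𝒰KL) ⊗ₜ[K] u)) := by
        refine TP_le K L fun a ha b hb => ?_
        simp only [Submodule.mem_comap, LinearMap.add_apply, LinearMap.mulRight_apply,
          Algebra.TensorProduct.tmul_mul_tmul, mul_one]
        refine Submodule.add_mem _ (tmul_mem_TP K L ?_ ?_) (tmul_mem_TP K L ?_ ?_)
        · exact F_mul_W K L n (Submodule.mul_mem_mul ha (hu ▸ ι_mem_W K L q))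
        · exact F_le_succ K L n hb
        · exact F_le_succ K L n ha
        · exact F_mul_W K L n (Submodule.mul_mem_mul hb (hu ▸ ι_mem_W K L q))
      have := hle (ih hy)
      simpa using this
    have hu1 : u ∈ F K L (n+1) := F_mono K L (by omega) (W_le_F_one K L (hu ▸ ι_mem_W K L q))
    have hy1 : y ∈ F K L (n+1) := hy
    refine Submodule.sub_mem _ (Submodule.add_mem _ (Submodule.add_mem _ h1 ?_) ?_) ?_
    · exact tmul_mem_TP K L hu1 hy1
    · exact tmul_mem_TP K L hy1 hu1
    · refine Submodule.smul_mem _ _ (Submodule.add_mem _ ?_ ?_)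
      · exact tmul_mem_TP K L hu1 (one_mem_F K L (n+1))
      · exact tmul_mem_TP K L (one_mem_F K L (n+1)) hu1

lemma F_exhaustive (x : 𝒰KL) : ∃ n, x ∈ F K L n := by
  obtain ⟨t, rfl⟩ : ∃ t, UniversalEnvelopingAlgebra.mkAlgHom K L t = x :=
    RingCon.mkₐ_surjective _ x
  induction t using TensorAlgebra.induction with
  | algebraMap c =>
    exact ⟨0, by rw [AlgHom.commutes]; exact algebraMap_mem_F K L c 0⟩
  | ι v =>
    refine ⟨1, ?_⟩
    have : (UniversalEnvelopingAlgebra.mkAlgHom K L) (TensorAlgebra.ι K v)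
        = ιL K L v := rfl
    rw [this]
    exact W_le_F_one K L (ι_mem_W K L v)
  | mul a b ha hb =>
    obtain ⟨m, hm⟩ := ha
    obtain ⟨n, hn⟩ := hb
    exact ⟨m + n, by rw [map_mul]; exact F_mul K L m n (Submodule.mul_mem_mul hm hn)⟩
  | add a b ha hb =>
    obtain ⟨m, hm⟩ := ha
    obtain ⟨n, hn⟩ := hb
    refine ⟨max m n, ?_⟩
    rw [map_add]
    exact Submodule.add_mem _ (F_mono K L (le_max_left m n) hm)
      (F_mono K L (le_max_right m n) hn)


end MilnorMooreAux

section TMI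
variable {K : Type*} [Field K] {V₁ V₂ W₁ W₂ : Type*}
  [AddCommGroup V₁] [Module K V₁] [AddCommGroup V₂] [Module K V₂]
  [AddCommGroup W₁] [Module K W₁] [AddCommGroup W₂] [Module K W₂]

lemma tensor_map_injective {f : V₁ →ₗ[K] W₁} {g : V₂ →ₗ[K] W₂}
    (hf : Function.Injective f) (hg : Function.Injective g) :
    Function.Injective (TensorProduct.map f g) := by
  rw [← LinearMap.lTensor_comp_rTensor]
  exact (Module.Flat.lTensor_preserves_injective_linearMap g hg).comp
    (Module.Flat.rTensor_preserves_injective_linearMap f hf)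

end TMI

open MilnorMooreAux

/-- **Milnor–Moore theorem, essential image.**
Let `K` be a field of characteristic zero, `H` a Hopf algebra over `K`, and `P` a Lie
subalgebra of `H` (for the commutator bracket) whose carrier is exactly the set of
primitive elements of `H`.  If `H` is generated as a `K`-algebra by its primitive
elements, then the `K`-algebra homomorphism `U(P) → H` obtained by applying the
universal property of the universal enveloping algebra to the inclusion Lie algebra
homomorphism `P → H` is bijective. -/
theorem milnor_moore_essential_image
    (K : Type*) [Field K] [CharZero K]
    (H : Type*) [Ring H] [HopfAlgebra K H]
    (P : LieSubalgebra K H)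
    (hP : (P : Set H) =
      {a : H | Coalgebra.comul (R := K) a = a ⊗ₜ[K] 1 + 1 ⊗ₜ[K] a})
    (hgen : Algebra.adjoin K
      {a : H | Coalgebra.comul (R := K) a = a ⊗ₜ[K] 1 + 1 ⊗ₜ[K] a} = ⊤) :
    Function.Bijective (UniversalEnvelopingAlgebra.lift K P.incl) := by
  set φ : UniversalEnvelopingAlgebra K ↥P →ₐ[K] H :=
    UniversalEnvelopingAlgebra.lift K P.incl with hφ
  have h1H : (1 : H) ≠ 0 := by
    intro h
    have : (1 : K) = 0 := by
      rw [← Bialgebra.counit_one (R := K) (A := H), h, map_zero]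
    exact one_ne_zero this
  have hprim_counit : ∀ a : H,
      Coalgebra.comul (R := K) a = a ⊗ₜ[K] 1 + 1 ⊗ₜ[K] a →
      Coalgebra.counit (R := K) a = 0 := by
    intro a ha
    have h2 := Coalgebra.rTensor_counit_comul (R := K) a
    rw [ha, map_add] at h2
    simp only [LinearMap.rTensor_tmul, Bialgebra.counit_one] at h2
    have h3 : (Coalgebra.counit (R := K) a) ⊗ₜ[K] (1 : H) = 0 := by
      have := congrArg (fun z => z - (1:K) ⊗ₜ[K] a) h2
      simpa using this
    have h4 := congrArg (TensorProduct.lid K H) h3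
    simp only [TensorProduct.lid_tmul, map_zero] at h4
    rcases smul_eq_zero.mp h4 with h | h
    · exact h
    · exact absurd h h1H
  have hφι : ∀ p : ↥P, φ (ιL K ↥P p) = (p : H) := fun p =>
    UniversalEnvelopingAlgebra.lift_ι_apply K P.incl p
  have hprim : ∀ p : ↥P, Coalgebra.comul (R := K) (p : H)
      = (p : H) ⊗ₜ[K] 1 + 1 ⊗ₜ[K] (p : H) := by
    intro p
    have h : (↑p : H) ∈ (P : Set H) := p.2
    rw [hP] at h
    exact h
  -- compatibility of comultiplications
  have hcomp : (Algebra.TensorProduct.map φ φ).comp (Δ K ↥P)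
      = (Bialgebra.comulAlgHom K H).comp φ := by
    apply UniversalEnvelopingAlgebra.hom_ext
    apply LieHom.ext
    intro p
    show Algebra.TensorProduct.map φ φ (Δ K ↥P (ιL K ↥P p))
      = Bialgebra.comulAlgHom K H (φ (ιL K ↥P p))
    rw [Δ_ι, map_add, Algebra.TensorProduct.map_tmul, Algebra.TensorProduct.map_tmul,
      map_one, hφι]
    show _ = Coalgebra.comul (R := K) (p : H)
    rw [hprim p]
  have hcounit : (Bialgebra.counitAlgHom K H).comp φ = εU K ↥P := by
    apply UniversalEnvelopingAlgebra.hom_ext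
    apply LieHom.ext
    intro p
    show Bialgebra.counitAlgHom K H (φ (ιL K ↥P p)) = εU K ↥P (ιL K ↥P p)
    rw [hφι, εU_ι]
    exact hprim_counit _ (hprim p)
  -- the key induction
  have key : ∀ n, ∀ x ∈ F K ↥P n, φ x = 0 → x = 0 := by
    intro n
    induction n with
    | zero =>
      intro x hx hx0
      rw [F_zero, Submodule.one_eq_range] at hx
      obtain ⟨c, rfl⟩ := hx
      simp only [Algebra.linearMap_apply, AlgHom.commutes] at hx0 ⊢
      have : c = 0 := by
        have := congrArg (Bialgebra.counitAlgHom K H) hx0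
        simpa using this
      rw [this, map_zero]
    | succ n ih =>
      match n, ih with
      | 0, _ =>
        intro x hx hx0
        rw [F_succ, F_zero, Submodule.one_mul] at hx
        obtain ⟨a, ha, w, hw, rfl⟩ := Submodule.mem_sup.mp hx
        rw [Submodule.one_eq_range] at ha
        obtain ⟨c, rfl⟩ := ha
        obtain ⟨q, rfl⟩ := hw
        simp only [Algebra.linearMap_apply] at hx0
        rw [map_add, AlgHom.commutes, hφι] at hx0
        have hc : c = 0 := by
          have h5 := congrArg (Bialgebra.counitAlgHom K H) hx0
          rw [map_add, AlgHom.commutes, map_zero] at h5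
          have h6 : Bialgebra.counitAlgHom K H (q : H) = 0 := hprim_counit _ (hprim q)
          simpa [h6] using h5
        rw [hc, map_zero, zero_add] at hx0
        have hq : q = 0 := by
          ext
          exact hx0
        rw [hc, hq]
        simp
      | (m+1), ih =>
        intro x hx hx0
        -- ε x = 0
        have hεx : εU K ↥P x = 0 := by
          have := congrFun (congrArg (fun (f : _ →ₐ[K] K) => (f : _ → K)) hcounit) x
          simp only [AlgHom.coe_comp, Function.comp_apply] at this
          rw [← this, hx0, map_zero]
        -- image of Dt x under φ ⊗ φ is zero
        have hDt : Dt K ↥P x ∈ TP K ↥P (F K ↥P (m+1)) (F K ↥P (m+1)) := Dt_F K ↥P (m+1) hx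
        have hmap0 : TensorProduct.map φ.toLinearMap φ.toLinearMap (Dt K ↥P x) = 0 := by
          rw [Dt_apply]
          have hΔx : TensorProduct.map φ.toLinearMap φ.toLinearMap (Δ K ↥P x)
              = Coalgebra.comul (R := K) (φ x) := by
            have := congrFun (congrArg (fun (f : _ →ₐ[K] _) => (f : _ → _)) hcomp) x
            simp only [AlgHom.coe_comp, Function.comp_apply] at this
            exact this
          rw [map_add, map_sub, map_sub, hΔx, hx0, map_zero, map_smul, hεx, zero_smul, add_zero]
          simp [TensorProduct.map_tmul, hx0]
        -- injectivity of φ ⊗ φ on TP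
        have hDt0 : Dt K ↥P x = 0 := by
          obtain ⟨z, hz⟩ := hDt
          have hinj : Function.Injective
              (φ.toLinearMap ∘ₗ (F K ↥P (m+1)).subtype) := by
            intro a b hab
            have : ((a : UniversalEnvelopingAlgebra K ↥P) - b) ∈ F K ↥P (m+1) :=
              Submodule.sub_mem _ a.2 b.2
            have h0 : φ ((a : UniversalEnvelopingAlgebra K ↥P) - b) = 0 := by
              simp only [LinearMap.coe_comp, Function.comp_apply, Submodule.coe_subtype,
                AlgHom.toLinearMap_apply] at hab
              rw [map_sub, hab, sub_self]
            have := ih _ this h0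
            exact Subtype.ext (by rwa [sub_eq_zero] at this)
          have hcompz : TensorProduct.map φ.toLinearMap φ.toLinearMap
              (TensorProduct.map (F K ↥P (m+1)).subtype (F K ↥P (m+1)).subtype z)
              = TensorProduct.map (φ.toLinearMap ∘ₗ (F K ↥P (m+1)).subtype)
                  (φ.toLinearMap ∘ₗ (F K ↥P (m+1)).subtype) z := by
            rw [TensorProduct.map_comp]
            rfl
          have hz0 : z = 0 := tensor_map_injective hinj hinj
            (by rw [map_zero, ← hcompz, hz, hmap0])
          rw [← hz, hz0, map_zero]
        -- x is primitive in U
        have hΔprim : Δ K ↥P x = x ⊗ₜ[K] 1 + 1 ⊗ₜ[K] x := by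
          have := Dt_apply K ↥P x
          rw [hDt0, hεx, zero_smul, add_zero] at this
          have h7 : Δ K ↥P x - x ⊗ₜ[K] 1 - 1 ⊗ₜ[K] x = 0 := this.symm
          rw [sub_sub, sub_eq_zero] at h7
          exact h7
        -- Euler operator argument
        have heuler := euler K ↥P (m+1) hx
        simp only [Submodule.mem_comap, LinearMap.sub_apply, LinearMap.smul_apply,
          LinearMap.id_coe, id_eq, Tl_apply, hΔprim, map_add, LinearMap.mul'_apply,
          mul_one, one_mul] at heuler
        have hsm : ((2:K) - (2:K)^(m+2)) • x ∈ F K ↥P (m+1) := by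
          have : ((2:K) - (2:K)^(m+2)) • x = x + x - (2:K)^(m+2) • x := by
            rw [sub_smul, two_smul]
          rwa [this]
        have hc0 : (2:K) - (2:K)^(m+2) ≠ 0 := by
          intro h
          have h8 : (2:K)^(m+2) = (2:K) := (sub_eq_zero.mp h).symm
          have h9 : ((2^(m+2) : ℕ) : K) = ((2:ℕ) : K) := by push_cast; exact_mod_cast h8
          have h10 : (2^(m+2) : ℕ) = 2 := Nat.cast_injective h9
          have : 4 ≤ 2^(m+2) := by
            calc (4:ℕ) = 2^2 := rfl
            _ ≤ 2^(m+2) := Nat.pow_le_pow_right (by omega) (by omega)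
          omega
        have hxF : x ∈ F K ↥P (m+1) := by
          have := Submodule.smul_mem _ ((2:K) - (2:K)^(m+2))⁻¹ hsm
          rwa [inv_smul_smul₀ hc0] at this
        exact ih x hxF hx0
  constructor
  · -- injective
    intro a b hab
    obtain ⟨n, hn⟩ := F_exhaustive K ↥P (a - b)
    have h0 : φ (a - b) = 0 := by rw [map_sub, sub_eq_zero]; exact hab
    have := key n _ hn h0
    rwa [sub_eq_zero] at this
  · -- surjective
    intro a
    have hrange : Algebra.adjoin K
        {a : H | Coalgebra.comul (R := K) a = a ⊗ₜ[K] 1 + 1 ⊗ₜ[K] a} ≤ φ.range := by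
      refine Algebra.adjoin_le ?_
      intro b hb
      have hbP : b ∈ P := by
        have : b ∈ (P : Set H) := by rw [hP]; exact hb
        exact this
      exact ⟨ιL K ↥P ⟨b, hbP⟩, hφι ⟨b, hbP⟩⟩
    have : a ∈ φ.range := by
      rw [hgen] at hrange
      exact hrange trivial
    obtain ⟨u, hu⟩ := this
    exact ⟨u, hu⟩
end

section
/- Recognition of cocartesian monoidal structures via a monadic symmetric monoidal functor (Lemma "nnlklj" of the paper, stated for ordinary categories): Let C be a symmetric monoidal category that admits finite coproducts, let D be a symmetric monoidal category, and let G : D ⥤ C be a functor that is symmetric monoidal and monadic, with left adjoint F : C ⥤ D. Assume the tensor unit 𝟙_D of D is an initial object, and assume that for all objects X, Y of C the canonical morphisms F X ≅ F X ⊗ 𝟙_D → F X ⊗ F Y and F Y ≅ 𝟙_D ⊗ F Y → F X ⊗ F Y (given by the inverse unitors followed by tensoring with the unique morphisms out of the initial tensor unit) exhibit F X ⊗ F Y as a binary coproduct of F X and F Y. Then for all objects A, B of D, the analogous canonical morphisms A → A ⊗ B and B → A ⊗ B exhibit A ⊗ B as a binary coproduct of A and B; i.e., the monoidal structure on D is cocartesian.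 -/
open CategoryTheory MonoidalCategory Limits

namespace CocartRec

section Conj
variable {E : Type*} [Category E]

/-- Transport a split coequalizer along isomorphisms of the three objects. -/
def conjSplit {X Y Z X' Y' Z' : E} {f g : X ⟶ Y} {π : Y ⟶ Z}
    (t : CategoryTheory.IsSplitCoequalizer f g π) (eX : X ≅ X') (eY : Y ≅ Y') (eZ : Z ≅ Z') :
    CategoryTheory.IsSplitCoequalizer (eX.inv ≫ f ≫ eY.hom) (eX.inv ≫ g ≫ eY.hom)
      (eY.inv ≫ π ≫ eZ.hom) where
  rightSection := eZ.inv ≫ t.rightSection ≫ eY.hom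
  leftSection := eY.inv ≫ t.leftSection ≫ eX.hom
  condition := by simp [t.condition_assoc]
  rightSection_π := by simp
  leftSection_bottom := by simp
  leftSection_top := by simp

noncomputable def createsGSplit {C : Type*} [Category C] {D : Type*} [Category D]
    (G : D ⥤ C) [MonadicRightAdjoint G] {A B : D} (f g : A ⟶ B) [G.IsSplitPair f g] :
    CreatesColimit (parallelPair f g) G := by
  apply (config := { allowSynthFailures := true }) monadicCreatesColimitOfPreservesColimit
  all_goals
    apply @preservesColimit_of_iso_diagram _ _ _ _ _ _ _ _ _ (diagramIsoParallelPair _).symm ?_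
    dsimp
    infer_instance

end Conj

section Flip

variable {D : Type*} [Category D] [MonoidalCategory D] [BraidedCategory D]

noncomputable def flipColim (hI : IsInitial (𝟙_ D)) (A B : D)
    (hc : IsColimit (BinaryCofan.mk ((ρ_ A).inv ≫ (A ◁ hI.to B)) ((λ_ B).inv ≫ (hI.to A ▷ B)))) :
    IsColimit (BinaryCofan.mk ((ρ_ B).inv ≫ (B ◁ hI.to A)) ((λ_ A).inv ≫ (hI.to B ▷ A))) := by
  have hb1 : (β_ (𝟙_ D) B).hom = (λ_ B).hom ≫ (ρ_ B).inv := by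
    rw [← braiding_rightUnitor]; simp
  have hb2 : (β_ A (𝟙_ D)).hom = (ρ_ A).hom ≫ (λ_ A).inv := by
    rw [← braiding_leftUnitor]; simp
  have h1 : ((λ_ B).inv ≫ (hI.to A ▷ B)) ≫ (β_ A B).hom = (ρ_ B).inv ≫ (B ◁ hI.to A) := by
    rw [Category.assoc, BraidedCategory.braiding_naturality_left, ← Category.assoc, hb1]
    simp
  have h2 : ((ρ_ A).inv ≫ (A ◁ hI.to B)) ≫ (β_ A B).hom = (λ_ A).inv ≫ (hI.to B ▷ A) := by
    rw [Category.assoc, BraidedCategory.braiding_naturality_right, ← Category.assoc, hb2]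
    simp
  refine (BinaryCofan.isColimitFlip hc).ofIsoColimit (Cocones.ext (β_ A B) ?_)
  rintro ⟨⟨⟩⟩
  · exact h1
  · exact h2

end Flip

section Step

variable {C : Type*} [Category C] [MonoidalCategory C] [BraidedCategory C]
variable {D : Type*} [Category D] [MonoidalCategory D] [BraidedCategory D]

lemma step (G : D ⥤ C) [G.Braided] [MonadicRightAdjoint G]
    (F : C ⥤ D) (adj : F ⊣ G) (hI : IsInitial (𝟙_ D)) (A : D)
    (hA : ∀ Y : C, Nonempty (IsColimit (BinaryCofan.mk
        ((ρ_ A).inv ≫ (A ◁ hI.to (F.obj Y)))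
        ((λ_ (F.obj Y)).inv ≫ (hI.to A ▷ F.obj Y))))) (B : D) :
    Nonempty (IsColimit (BinaryCofan.mk
      ((ρ_ A).inv ≫ (A ◁ hI.to B)) ((λ_ B).inv ≫ (hI.to A ▷ B)))) := by
  set f₁ : F.obj (G.obj (F.obj (G.obj B))) ⟶ F.obj (G.obj B) :=
    F.map (G.map (adj.counit.app B)) with hf₁
  set f₂ : F.obj (G.obj (F.obj (G.obj B))) ⟶ F.obj (G.obj B) :=
    adj.counit.app (F.obj (G.obj B)) with hf₂
  set π : F.obj (G.obj B) ⟶ B := adj.counit.app B with hπ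
  have w : f₁ ≫ π = f₂ ≫ π := adj.counit.naturality (adj.counit.app B)
  have sc : CategoryTheory.IsSplitCoequalizer (G.map f₁) (G.map f₂) (G.map π) :=
    { rightSection := adj.unit.app (G.obj B)
      leftSection := adj.unit.app (G.obj (F.obj (G.obj B)))
      condition := by rw [← G.map_comp, ← G.map_comp, w]
      rightSection_π := adj.right_triangle_components B
      leftSection_bottom := adj.right_triangle_components (F.obj (G.obj B))
      leftSection_top := (adj.unit.naturality (G.map (adj.counit.app B))).symm }
  -- the untensored coequalizer, giving `Epi π`
  haveI sp0 : G.IsSplitPair f₁ f₂ := ⟨⟨_, _, ⟨sc⟩⟩⟩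
  haveI := createsGSplit G f₁ f₂
  have hcoeq0 : IsColimit (Cofork.ofπ π w) :=
    isColimitOfIsColimitCoforkMap G w sc.isCoequalizer
  have hepi : Epi π := ⟨fun u v huv => Cofork.IsColimit.hom_ext hcoeq0 (by simpa using huv)⟩
  -- the tensored coequalizer
  have w' : (A ◁ f₁) ≫ (A ◁ π) = (A ◁ f₂) ≫ (A ◁ π) := by
    rw [← MonoidalCategory.whiskerLeft_comp, ← MonoidalCategory.whiskerLeft_comp, w]
  have gsc : CategoryTheory.IsSplitCoequalizer
      (G.map (A ◁ f₁)) (G.map (A ◁ f₂)) (G.map (A ◁ π)) := by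
    rw [Functor.Monoidal.map_whiskerLeft (F := G) A f₁,
      Functor.Monoidal.map_whiskerLeft (F := G) A f₂,
      Functor.Monoidal.map_whiskerLeft (F := G) A π]
    exact conjSplit (sc.map (tensorLeft (G.obj A)))
      (Functor.Monoidal.μIso G A _) (Functor.Monoidal.μIso G A _)
      (Functor.Monoidal.μIso G A B)
  haveI sp : G.IsSplitPair (A ◁ f₁) (A ◁ f₂) := ⟨⟨_, _, ⟨gsc⟩⟩⟩
  haveI := createsGSplit G (A ◁ f₁) (A ◁ f₂)
  have hcoeq : IsColimit (Cofork.ofπ (A ◁ π) w') :=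
    isColimitOfIsColimitCoforkMap G w' gsc.isCoequalizer
  -- naturality of the canonical maps
  have inl_nat : ∀ {X Y : D} (u : X ⟶ Y) {W : D} (v : A ⊗ Y ⟶ W),
      (ρ_ A).inv ≫ (A ◁ hI.to X) ≫ (A ◁ u) ≫ v = (ρ_ A).inv ≫ (A ◁ hI.to Y) ≫ v := by
    intro X Y u W v
    rw [← MonoidalCategory.whiskerLeft_comp_assoc, hI.hom_ext (hI.to X ≫ u) (hI.to Y)]
  have inr_nat : ∀ {X Y : D} (u : X ⟶ Y) {W : D} (v : A ⊗ Y ⟶ W),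
      (λ_ X).inv ≫ (hI.to A ▷ X) ≫ (A ◁ u) ≫ v = u ≫ (λ_ Y).inv ≫ (hI.to A ▷ Y) ≫ v := by
    intro X Y u W v
    rw [← whisker_exchange_assoc, ← leftUnitor_inv_naturality_assoc]
  obtain ⟨c₁⟩ := hA (G.obj B)
  obtain ⟨c₂⟩ := hA (G.obj (F.obj (G.obj B)))
  have d0l : ∀ s : BinaryCofan A B,
      (ρ_ A).inv ≫ (A ◁ hI.to (F.obj (G.obj B))) ≫
        c₁.desc (BinaryCofan.mk s.inl (π ≫ s.inr)) = s.inl := fun s => by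
    exact (Category.assoc _ _ _).symm.trans (c₁.fac (BinaryCofan.mk s.inl (π ≫ s.inr)) ⟨WalkingPair.left⟩)
  have d0r : ∀ s : BinaryCofan A B,
      (λ_ (F.obj (G.obj B))).inv ≫ (hI.to A ▷ F.obj (G.obj B)) ≫
        c₁.desc (BinaryCofan.mk s.inl (π ≫ s.inr)) = π ≫ s.inr := fun s => by
    exact (Category.assoc _ _ _).symm.trans (c₁.fac (BinaryCofan.mk s.inl (π ≫ s.inr)) ⟨WalkingPair.right⟩)
  have wdesc : ∀ s : BinaryCofan A B,
      (A ◁ f₁) ≫ c₁.desc (BinaryCofan.mk s.inl (π ≫ s.inr)) =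
      (A ◁ f₂) ≫ c₁.desc (BinaryCofan.mk s.inl (π ≫ s.inr)) := by
    intro s
    apply BinaryCofan.IsColimit.hom_ext c₂
    · simp only [BinaryCofan.mk_inl, Category.assoc]
      erw [Category.assoc, Category.assoc, inl_nat f₁, inl_nat f₂]
    · simp only [BinaryCofan.mk_inr, Category.assoc]
      erw [Category.assoc, Category.assoc, inr_nat f₁, inr_nat f₂, d0r s, ← Category.assoc, ← Category.assoc, w]
  refine ⟨BinaryCofan.isColimitMk
    (fun s => Cofork.IsColimit.desc hcoeq (c₁.desc (BinaryCofan.mk s.inl (π ≫ s.inr))) (wdesc s))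
    ?_ ?_ ?_⟩
  · intro s
    have hd : (A ◁ π) ≫ Cofork.IsColimit.desc hcoeq
        (c₁.desc (BinaryCofan.mk s.inl (π ≫ s.inr))) (wdesc s) =
        c₁.desc (BinaryCofan.mk s.inl (π ≫ s.inr)) := by
      exact Cofork.IsColimit.π_desc hcoeq
    erw [Category.assoc, ← inl_nat π, hd, d0l s]
  · intro s
    have hd : (A ◁ π) ≫ Cofork.IsColimit.desc hcoeq
        (c₁.desc (BinaryCofan.mk s.inl (π ≫ s.inr))) (wdesc s) =
        c₁.desc (BinaryCofan.mk s.inl (π ≫ s.inr)) := by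
      exact Cofork.IsColimit.π_desc hcoeq
    erw [← cancel_epi π]
    simp only [Category.assoc]
    erw [← inr_nat π, hd, d0r s]
  · intro s m hm1 hm2
    have hd : (A ◁ π) ≫ Cofork.IsColimit.desc hcoeq
        (c₁.desc (BinaryCofan.mk s.inl (π ≫ s.inr))) (wdesc s) =
        c₁.desc (BinaryCofan.mk s.inl (π ≫ s.inr)) := by
      exact Cofork.IsColimit.π_desc hcoeq
    simp only [Category.assoc] at hm1 hm2
    apply Cofork.IsColimit.hom_ext hcoeq
    simp only [Cofork.π_ofπ]
    erw [hd]
    apply BinaryCofan.IsColimit.hom_ext c₁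
    · simp only [BinaryCofan.mk_inl, Category.assoc]
      erw [Category.assoc, Category.assoc, inl_nat π, hm1, d0l s]
    · simp only [BinaryCofan.mk_inr, Category.assoc]
      erw [Category.assoc, Category.assoc, inr_nat π, hm2, d0r s]
  
end Step

end CocartRec

/-- **Recognition of cocartesian monoidal structures via a monadic symmetric monoidal
functor** (Lemma `nnlklj` of the paper, for ordinary categories).
Let `C` be a symmetric monoidal category admitting finite coproducts, `D` a symmetric
monoidal category, and `G : D ⥤ C` a symmetric monoidal and monadic functor with left
adjoint `F : C ⥤ D`.  Assume the tensor unit of `D` is initial, and that for all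
objects `X`, `Y` of `C` the canonical morphisms `F X → F X ⊗ F Y` and
`F Y → F X ⊗ F Y` exhibit `F X ⊗ F Y` as a binary coproduct of `F X` and `F Y`.
Then for all objects `A`, `B` of `D` the analogous canonical morphisms exhibit
`A ⊗ B` as a binary coproduct of `A` and `B`; i.e. the monoidal structure on `D` is
cocartesian. -/
theorem cocartesian_of_monadic_symmetric_monoidal
    {C : Type*} [Category C] [MonoidalCategory C] [SymmetricCategory C]
    {D : Type*} [Category D] [MonoidalCategory D] [SymmetricCategory D]
    [HasFiniteCoproducts C]
    (G : D ⥤ C) [G.Braided] [MonadicRightAdjoint G]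
    (F : C ⥤ D) (adj : F ⊣ G)
    (hI : IsInitial (𝟙_ D))
    (h : ∀ X Y : C,
      Nonempty (IsColimit (BinaryCofan.mk
        ((ρ_ (F.obj X)).inv ≫ (F.obj X ◁ hI.to (F.obj Y)))
        ((λ_ (F.obj Y)).inv ≫ (hI.to (F.obj X) ▷ F.obj Y)))))
    (A B : D) :
    Nonempty (IsColimit (BinaryCofan.mk
      ((ρ_ A).inv ≫ (A ◁ hI.to B))
      ((λ_ B).inv ≫ (hI.to A ▷ B)))) := by
  have P1 : ∀ (X : C) (B' : D), Nonempty (IsColimit (BinaryCofan.mk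
      ((ρ_ (F.obj X)).inv ≫ (F.obj X ◁ hI.to B'))
      ((λ_ B').inv ≫ (hI.to (F.obj X) ▷ B')))) :=
    fun X B' => CocartRec.step G F adj hI (F.obj X) (fun Y => h X Y) B'
  have P2 : ∀ (Y : C), Nonempty (IsColimit (BinaryCofan.mk
      ((ρ_ A).inv ≫ (A ◁ hI.to (F.obj Y)))
      ((λ_ (F.obj Y)).inv ≫ (hI.to A ▷ F.obj Y)))) :=
    fun Y => ⟨CocartRec.flipColim hI (F.obj Y) A (P1 Y A).some⟩
  exact CocartRec.step G F adj hI A P2 B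
end
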